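/- Let n, p, k be positive integers with k ≤ n, and let f_j : [0,T] → ℝ (j=1,...,n) and g_i : [0,T] → ℝ (i=1,...,p) be integrable. Then the nested iterated integral ∫_{Δ^n_{θ,t}} f_1(s_1)...f_k(s_k) (∫_{Δ^p_{θ,s_k}} g_1(r_1)...g_p(r_p) dr) f_{k+1}(s_{k+1})...f_n(s_n) ds can be written as a sum, over a set A_{n,p} of permutations of {1,...,n+p} with cardinality at most C^{n+p} for some universal constant C ≥ 1, of iterated simplex integrals ∫_{Δ^{n+p}_{θ,t}} h^σ_1(w_1)...h^σ_{n+p}(w_{n+p}) dw where each h^σ_l belongs to {f_1,...,f_n, g_1,...,g_p}. -/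

import Mathlib

open MeasureTheory Finset

/-- The `m`-dimensional simplex `{(s_m,…,s_1) : θ < s_m < … < s_1 < t}`, with coordinates
strictly decreasing in the index (so `s 0` is the largest coordinate `s_1`). -/
def simplex (m : ℕ) (θ t : ℝ) : Set (Fin m → ℝ) :=
  {s | (∀ i j : Fin m, i < j → s j < s i) ∧ ∀ i, θ < s i ∧ s i < t}

/-! ### Combinatorial auxiliary lemmas -/

lemma strictMono_eq_of_range {q r : ℕ} {f g : Fin q → Fin r} (hf : StrictMono f)
    (hg : StrictMono g) (h : ∀ x, (∃ a, f a = x) ↔ ∃ a, g a = x) : f = g := by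
  have hs : Finset.image f Finset.univ = Finset.image g Finset.univ := by
    ext x
    simp only [Finset.mem_image, Finset.mem_univ, true_and]
    exact h x
  have hc : (Finset.image f Finset.univ).card = q := by
    rw [Finset.card_image_of_injective _ hf.injective, Finset.card_univ, Fintype.card_fin]
  have h1 := Finset.orderEmbOfFin_unique hc
    (fun x => Finset.mem_image_of_mem f (Finset.mem_univ x)) hf
  have h2 := Finset.orderEmbOfFin_unique hc
    (fun x => by rw [hs]; exact Finset.mem_image_of_mem g (Finset.mem_univ x)) hg
  rw [h2]; exact funext fun x => congrFun h1 x

lemma perm_inv_apply_self {m : ℕ} (σ : Equiv.Perm (Fin m)) (x : Fin m) : σ⁻¹ (σ x) = x := by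
  simp

lemma perm_apply_inv_self {m : ℕ} (σ : Equiv.Perm (Fin m)) (x : Fin m) : σ (σ⁻¹ x) = x := by
  simp

lemma perm_eq_of_inv_eq {m : ℕ} {σ τ : Equiv.Perm (Fin m)} (h : ∀ x, σ⁻¹ x = τ⁻¹ x) : σ = τ := by
  refine Equiv.ext fun x => ?_
  have := h (τ x)
  rw [perm_inv_apply_self] at this
  calc σ x = σ (σ⁻¹ (τ x)) := by rw [this]
  _ = τ x := by rw [perm_apply_inv_self]

/-- The "cell" of a permutation: those `v` whose rearrangement by `σ` is decreasing. -/
def cellS (m : ℕ) (θ t : ℝ) (σ : Equiv.Perm (Fin m)) : Set (Fin m → ℝ) :=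
  {v | v ∘ σ ∈ simplex m θ t}

/-- The nested integration region, viewed inside `Fin (n + p) → ℝ`. -/
def Dset (n p : ℕ) (θ t : ℝ) (kk : Fin n) : Set (Fin (n + p) → ℝ) :=
  {w | (fun a => w (Fin.castAdd p a)) ∈ simplex n θ t ∧
       (fun b => w (Fin.natAdd n b)) ∈ simplex p θ (w (Fin.castAdd p kk))}

/-- The order pattern of permutations whose cells make up `Dset`. -/
def Qp (n p : ℕ) (kk : Fin n) (σ : Equiv.Perm (Fin (n + p))) : Prop :=
  (∀ a b : Fin n, a < b → σ⁻¹ (Fin.castAdd p a) < σ⁻¹ (Fin.castAdd p b)) ∧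
  (∀ i j : Fin p, i < j → σ⁻¹ (Fin.natAdd n i) < σ⁻¹ (Fin.natAdd n j)) ∧
  (∀ i : Fin p, σ⁻¹ (Fin.castAdd p kk) < σ⁻¹ (Fin.natAdd n i))

lemma cell_bounds {m : ℕ} {θ t : ℝ} {σ : Equiv.Perm (Fin m)} {v : Fin m → ℝ}
    (hv : v ∈ cellS m θ t σ) : ∀ x, θ < v x ∧ v x < t := by
  intro x
  have h := hv.2 (σ⁻¹ x)
  simpa using h

lemma cell_lt_iff {m : ℕ} {θ t : ℝ} {σ : Equiv.Perm (Fin m)} {v : Fin m → ℝ}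
    (hv : v ∈ cellS m θ t σ) : ∀ x y, v y < v x ↔ σ⁻¹ x < σ⁻¹ y := by
  intro x y
  constructor
  · intro hlt
    rcases lt_trichotomy (σ⁻¹ x) (σ⁻¹ y) with h | h | h
    · exact h
    · exfalso
      have hxy : x = y := by
        have := congrArg σ h
        simpa using this
      rw [hxy] at hlt
      exact lt_irrefl _ hlt
    · exfalso
      have h2 := hv.1 _ _ h
      simp only [Function.comp_apply, perm_apply_inv_self] at h2
      exact lt_irrefl _ (hlt.trans h2)
  · intro h
    have h2 := hv.1 _ _ h
    simpa using h2

lemma exists_cell_mem {m : ℕ} {θ t : ℝ} {w : Fin m → ℝ} (hw : Function.Injective w)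
    (hb : ∀ x, θ < w x ∧ w x < t) : ∃ σ : Equiv.Perm (Fin m), w ∈ cellS m θ t σ := by
  refine ⟨Fin.revPerm.trans (Tuple.sort w), ?_, fun i => hb _⟩
  intro i j hij
  have hmono : StrictMono (w ∘ ⇑(Tuple.sort w)) :=
    (Tuple.monotone_sort w).strictMono_of_injective (hw.comp (Equiv.injective _))
  have hrev : Fin.rev j < Fin.rev i := Fin.rev_lt_rev.2 hij
  simpa using hmono hrev

lemma memD_iff_Q {n p : ℕ} {θ t : ℝ} {kk : Fin n} {σ : Equiv.Perm (Fin (n + p))}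
    {v : Fin (n + p) → ℝ} (hv : v ∈ cellS (n + p) θ t σ) :
    v ∈ Dset n p θ t kk ↔ Qp n p kk σ := by
  have hb := cell_bounds hv
  have hlt := cell_lt_iff hv
  constructor
  · rintro ⟨⟨hfo, hfb⟩, hgo, hgb⟩
    exact ⟨fun a b hab => (hlt _ _).1 (hfo a b hab),
           fun i j hij => (hlt _ _).1 (hgo i j hij),
           fun i => (hlt _ _).1 (hgb i).2⟩
  · rintro ⟨h1, h2, h3⟩
    exact ⟨⟨fun a b hab => (hlt _ _).2 (h1 a b hab), fun a => hb _⟩,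
           ⟨fun i j hij => (hlt _ _).2 (h2 i j hij),
            fun i => ⟨(hb _).1, (hlt _ _).2 (h3 i)⟩⟩⟩

lemma cell_disj {m : ℕ} {θ t : ℝ} {σ τ : Equiv.Perm (Fin m)} {v : Fin m → ℝ}
    (hσ : v ∈ cellS m θ t σ) (hτ : v ∈ cellS m θ t τ) : σ = τ := by
  have hltσ := cell_lt_iff hσ
  have hltτ := cell_lt_iff hτ
  have hiff : ∀ x y, σ⁻¹ x < σ⁻¹ y ↔ τ⁻¹ x < τ⁻¹ y :=
    fun x y => (hltσ x y).symm.trans (hltτ x y)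
  have hu : StrictMono (fun x => σ⁻¹ (τ x)) := by
    intro a b hab
    have h1 : τ⁻¹ (τ a) < τ⁻¹ (τ b) := by simpa using hab
    exact (hiff (τ a) (τ b)).2 h1
  have hid : (fun x => σ⁻¹ (τ x)) = (fun x : Fin m => x) := by
    refine strictMono_eq_of_range hu strictMono_id fun x => ?_
    exact ⟨fun _ => ⟨x, rfl⟩, fun _ => ⟨τ⁻¹ (σ x), by simp⟩⟩
  refine Equiv.ext fun x => ?_
  have hx := congrFun hid x
  calc σ x = σ (σ⁻¹ (τ x)) := by rw [hx]
  _ = τ x := by rw [perm_apply_inv_self]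

lemma card_filter_Qp_le (n p : ℕ) (kk : Fin n) [DecidablePred (Qp n p kk)] :
    (Finset.univ.filter (Qp n p kk)).card ≤ 2 ^ (n + p) := by
  classical
  set A := Finset.univ.filter (Qp n p kk) with hA
  have hinj : Set.InjOn (fun σ : Equiv.Perm (Fin (n + p)) =>
      (fun x : Fin (n + p) => decide ((σ x : ℕ) < n))) ↑A := by
    intro σ hσ τ hτ hst
    have hQσ : Qp n p kk σ := (Finset.mem_filter.1 hσ).2
    have hQτ : Qp n p kk τ := (Finset.mem_filter.1 hτ).2
    have hiff : ∀ x : Fin (n + p), ((σ x : ℕ) < n) ↔ ((τ x : ℕ) < n) := by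
      intro x
      have h := congrFun hst x
      simpa [decide_eq_decide] using h
    have hrca : ∀ (ρ : Equiv.Perm (Fin (n + p))) (x : Fin (n + p)),
        (∃ a : Fin n, ρ⁻¹ (Fin.castAdd p a) = x) ↔ ((ρ x : ℕ) < n) := by
      intro ρ x
      constructor
      · rintro ⟨a, rfl⟩
        rw [perm_apply_inv_self]
        exact a.isLt
      · intro hx
        refine ⟨⟨(ρ x : ℕ), hx⟩, ?_⟩
        have hca : Fin.castAdd p (⟨(ρ x : ℕ), hx⟩ : Fin n) = ρ x := Fin.ext rfl
        rw [hca, perm_inv_apply_self]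
    have hrna : ∀ (ρ : Equiv.Perm (Fin (n + p))) (x : Fin (n + p)),
        (∃ b : Fin p, ρ⁻¹ (Fin.natAdd n b) = x) ↔ ¬ ((ρ x : ℕ) < n) := by
      intro ρ x
      constructor
      · rintro ⟨b, rfl⟩
        rw [perm_apply_inv_self]
        simp [Fin.natAdd]
      · intro hx
        have hlt : (ρ x : ℕ) - n < p := by have := (ρ x).isLt; omega
        refine ⟨⟨(ρ x : ℕ) - n, hlt⟩, ?_⟩
        have hna : Fin.natAdd n (⟨(ρ x : ℕ) - n, hlt⟩ : Fin p) = ρ x := by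
          refine Fin.ext ?_
          simp only [Fin.natAdd]
          omega
        rw [hna, perm_inv_apply_self]
    have hF1 : (fun a : Fin n => σ⁻¹ (Fin.castAdd p a)) =
        fun a => τ⁻¹ (Fin.castAdd p a) :=
      strictMono_eq_of_range (fun a b hab => hQσ.1 a b hab) (fun a b hab => hQτ.1 a b hab)
        (fun x => (hrca σ x).trans ((hiff x).trans (hrca τ x).symm))
    have hF2 : (fun b : Fin p => σ⁻¹ (Fin.natAdd n b)) =
        fun b => τ⁻¹ (Fin.natAdd n b) :=
      strictMono_eq_of_range (fun a b hab => hQσ.2.1 a b hab) (fun a b hab => hQτ.2.1 a b hab)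
        (fun x => (hrna σ x).trans ((not_congr (hiff x)).trans (hrna τ x).symm))
    refine perm_eq_of_inv_eq fun x => ?_
    refine Fin.addCases (motive := fun x => σ⁻¹ x = τ⁻¹ x) (fun a => ?_) (fun b => ?_) x
    · exact congrFun hF1 a
    · exact congrFun hF2 b
  have h1 := Finset.card_le_card_of_injOn
    (fun σ : Equiv.Perm (Fin (n + p)) => (fun x : Fin (n + p) => decide ((σ x : ℕ) < n)))
    (fun σ _ => Finset.mem_univ _) hinj
  calc A.card ≤ (Finset.univ : Finset (Fin (n + p) → Bool)).card := h1
  _ = 2 ^ (n + p) := by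
      rw [Finset.card_univ]
      simp [Fintype.card_fun]

/-! ### Measure-theoretic auxiliary lemmas -/

lemma measurableSet_simplex {m : ℕ} {θ t : ℝ} : MeasurableSet (simplex m θ t) := by
  have h : simplex m θ t =
      (⋂ i : Fin m, ⋂ j : Fin m, {s : Fin m → ℝ | i < j → s j < s i}) ∩
      ((⋂ i : Fin m, {s : Fin m → ℝ | θ < s i}) ∩ ⋂ i : Fin m, {s : Fin m → ℝ | s i < t}) := by
    ext s
    simp only [simplex, Set.mem_setOf_eq, Set.mem_inter_iff, Set.mem_iInter, Set.mem_setOf_eq]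
    exact ⟨fun ⟨h1,h2⟩ => ⟨h1, fun i => (h2 i).1, fun i => (h2 i).2⟩,
      fun ⟨h1,h2,h3⟩ => ⟨h1, fun i => ⟨h2 i, h3 i⟩⟩⟩
  rw [h]
  refine MeasurableSet.inter ?_ (MeasurableSet.inter ?_ ?_) <;>
    refine MeasurableSet.iInter fun i => ?_
  · refine MeasurableSet.iInter fun j => ?_
    by_cases hij : i < j
    · simp only [hij, forall_true_left]
      exact measurableSet_lt (measurable_pi_apply j) (measurable_pi_apply i)
    · exact MeasurableSet.univ.congr (by ext; simp [hij])
  · exact measurableSet_lt measurable_const (measurable_pi_apply i)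
  · exact measurableSet_lt (measurable_pi_apply i) measurable_const

lemma null_eq_coords {m : ℕ} {a b : Fin m} (hab : a ≠ b) :
    (volume : Measure (Fin m → ℝ)) {w | w a = w b} = 0 := by
  set L : (Fin m → ℝ) →ₗ[ℝ] ℝ :=
    (LinearMap.proj a : (Fin m → ℝ) →ₗ[ℝ] ℝ) - (LinearMap.proj b : (Fin m → ℝ) →ₗ[ℝ] ℝ) with hL
  have hset : {w : Fin m → ℝ | w a = w b} = (LinearMap.ker L : Set (Fin m → ℝ)) := by
    ext w
    simp [hL, LinearMap.mem_ker, sub_eq_zero, LinearMap.proj]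
  rw [hset]
  refine Measure.addHaar_submodule _ _ ?_
  intro htop
  have h1 : Pi.single a (1:ℝ) ∈ LinearMap.ker L := htop ▸ Submodule.mem_top
  simp only [LinearMap.mem_ker, hL, LinearMap.sub_apply, LinearMap.proj_apply] at h1
  rw [Pi.single_eq_same, Pi.single_eq_of_ne (Ne.symm hab)] at h1
  norm_num at h1

lemma coe_perm_comp {m : ℕ} (σ : Equiv.Perm (Fin m)) :
    ⇑(MeasurableEquiv.piCongrLeft (fun _ : Fin m => ℝ) σ).symm = fun v => v ∘ σ := by
  ext v x
  exact Equiv.piCongrLeft_symm_apply _ σ v x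

lemma measurePreserving_comp_perm {m : ℕ} (σ : Equiv.Perm (Fin m)) :
    MeasurePreserving (fun v : Fin m → ℝ => v ∘ σ) volume volume := by
  have h := (MeasureTheory.measurePreserving_piCongrLeft (fun _ : Fin m => (volume : Measure ℝ)) σ).symm
    (MeasurableEquiv.piCongrLeft (fun _ : Fin m => ℝ) σ)
  rw [coe_perm_comp] at h
  simpa [volume_pi] using h

lemma measurableEmbedding_comp_perm {m : ℕ} (σ : Equiv.Perm (Fin m)) :
    MeasurableEmbedding (fun v : Fin m → ℝ => v ∘ σ) := by
  have h := (MeasurableEquiv.piCongrLeft (fun _ : Fin m => ℝ) σ).symm.measurableEmbedding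
  rwa [coe_perm_comp] at h

lemma setIntegral_perm {m : ℕ} {θ t : ℝ} (σ : Equiv.Perm (Fin m)) (Φ : (Fin m → ℝ) → ℝ) :
    ∫ v in cellS m θ t σ, Φ v = ∫ w in simplex m θ t, Φ (w ∘ ⇑σ⁻¹) := by
  have h := (measurePreserving_comp_perm σ).setIntegral_preimage_emb
    (measurableEmbedding_comp_perm σ) (fun w => Φ (w ∘ ⇑σ⁻¹)) (simplex m θ t)
  have hc : ∀ v : Fin m → ℝ, (v ∘ σ) ∘ ⇑σ⁻¹ = v := by
    intro v; funext x; simp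
  simp only [hc] at h
  exact h

noncomputable def splitEquiv (n p : ℕ) : (Fin (n + p) → ℝ) ≃ᵐ (Fin n → ℝ) × (Fin p → ℝ) :=
  (MeasurableEquiv.piCongrLeft (fun _ : Fin (n+p) => ℝ) finSumFinEquiv).symm.trans
    (MeasurableEquiv.sumPiEquivProdPi (fun _ : Fin n ⊕ Fin p => ℝ))

lemma splitEquiv_apply (n p : ℕ) (w : Fin (n + p) → ℝ) :
    splitEquiv n p w = ((fun a : Fin n => w (Fin.castAdd p a)),
      (fun b : Fin p => w (Fin.natAdd n b))) := by
  have hs : ⇑(MeasurableEquiv.piCongrLeft (fun _ : Fin (n+p) => ℝ) finSumFinEquiv).symm w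
      = fun x => w (finSumFinEquiv x) := by
    funext x; exact Equiv.piCongrLeft_symm_apply _ _ w x
  show (MeasurableEquiv.sumPiEquivProdPi (fun _ : Fin n ⊕ Fin p => ℝ))
      ((MeasurableEquiv.piCongrLeft (fun _ : Fin (n+p) => ℝ) finSumFinEquiv).symm w) = _
  rw [MeasurableEquiv.coe_sumPiEquivProdPi, hs]
  refine Prod.ext ?_ ?_ <;> funext a <;> simp [Equiv.sumPiEquivProdPi]

lemma measurePreserving_splitEquiv (n p : ℕ) :
    MeasurePreserving (⇑(splitEquiv n p)) volume volume := by
  have h1 := (MeasureTheory.measurePreserving_piCongrLeft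
      (fun _ : Fin (n + p) => (volume : Measure ℝ)) finSumFinEquiv).symm
      (MeasurableEquiv.piCongrLeft (fun _ : Fin (n+p) => ℝ) finSumFinEquiv)
  have h2 := MeasureTheory.measurePreserving_sumPiEquivProdPi
      (fun _ : Fin n ⊕ Fin p => (volume : Measure ℝ))
  have h3 := h2.comp h1
  simpa [volume_pi, Measure.volume_eq_prod, splitEquiv, MeasurableEquiv.coe_trans] using h3

lemma integrableOn_prod_box {m : ℕ} {T : ℝ} {H : Fin m → ℝ → ℝ}
    (hH : ∀ l, IntegrableOn (H l) (Set.Icc 0 T)) :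
    Integrable (fun w : Fin m → ℝ => ∏ l, (Set.Icc (0:ℝ) T).indicator (H l) (w l)) :=
  Integrable.fintype_prod (fun l => (integrable_indicator_iff measurableSet_Icc).2 (hH l))

lemma integrableOn_of_subset_box {m : ℕ} {T : ℝ} {H : Fin m → ℝ → ℝ}
    (hH : ∀ l, IntegrableOn (H l) (Set.Icc 0 T)) {S : Set (Fin m → ℝ)} (hS : MeasurableSet S)
    (hsub : ∀ w ∈ S, ∀ l, w l ∈ Set.Icc (0:ℝ) T) :
    IntegrableOn (fun w => ∏ l, H l (w l)) S := by
  refine ((integrableOn_prod_box hH).integrableOn (s := S)).congr_fun ?_ hS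
  intro w hw
  exact Finset.prod_congr rfl fun l _ => Set.indicator_of_mem (hsub w hw l) _

lemma measurableSet_Dprod {n p : ℕ} {θ t : ℝ} {kk : Fin n} :
    MeasurableSet {z : (Fin n → ℝ) × (Fin p → ℝ) |
      z.1 ∈ simplex n θ t ∧ z.2 ∈ simplex p θ (z.1 kk)} := by
  have h1 : MeasurableSet {z : (Fin n → ℝ) × (Fin p → ℝ) | z.1 ∈ simplex n θ t} :=
    measurable_fst measurableSet_simplex
  have hgoal : {z : (Fin n → ℝ) × (Fin p → ℝ) |
      z.1 ∈ simplex n θ t ∧ z.2 ∈ simplex p θ (z.1 kk)} =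
      {z : (Fin n → ℝ) × (Fin p → ℝ) | z.1 ∈ simplex n θ t} ∩
      {z : (Fin n → ℝ) × (Fin p → ℝ) | z.2 ∈ simplex p θ (z.1 kk)} := rfl
  rw [hgoal]
  refine h1.inter ?_
  have h2 : {z : (Fin n → ℝ) × (Fin p → ℝ) | z.2 ∈ simplex p θ (z.1 kk)} =
      (⋂ i : Fin p, ⋂ j : Fin p, {z : (Fin n → ℝ) × (Fin p → ℝ) | i < j → z.2 j < z.2 i}) ∩
      ((⋂ i : Fin p, {z : (Fin n → ℝ) × (Fin p → ℝ) | θ < z.2 i}) ∩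
        ⋂ i : Fin p, {z : (Fin n → ℝ) × (Fin p → ℝ) | z.2 i < z.1 kk}) := by
    ext z
    simp only [simplex, Set.mem_setOf_eq, Set.mem_inter_iff, Set.mem_iInter, Set.mem_setOf_eq]
    exact ⟨fun ⟨h1,h2⟩ => ⟨h1, fun i => (h2 i).1, fun i => (h2 i).2⟩,
      fun ⟨h1,h2,h3⟩ => ⟨h1, fun i => ⟨h2 i, h3 i⟩⟩⟩
  rw [h2]
  have hm2 : ∀ i : Fin p, Measurable fun z : (Fin n → ℝ) × (Fin p → ℝ) => z.2 i :=
    fun i => (measurable_pi_apply i).comp measurable_snd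
  refine MeasurableSet.inter ?_ (MeasurableSet.inter ?_ ?_) <;>
    refine MeasurableSet.iInter fun i => ?_
  · refine MeasurableSet.iInter fun j => ?_
    by_cases hij : i < j
    · simp only [hij, forall_true_left]
      exact measurableSet_lt (hm2 j) (hm2 i)
    · exact MeasurableSet.univ.congr (by ext; simp [hij])
  · exact measurableSet_lt measurable_const (hm2 i)
  · exact measurableSet_lt (hm2 i) ((measurable_pi_apply kk).comp measurable_fst)

/-! ### The function family -/

def Hfun {n p : ℕ} (f : Fin n → ℝ → ℝ) (g : Fin p → ℝ → ℝ) : Fin (n + p) → ℝ → ℝ :=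
  Fin.addCases f g

lemma Hfun_ca {n p : ℕ} (f : Fin n → ℝ → ℝ) (g : Fin p → ℝ → ℝ) (a : Fin n) :
    Hfun f g (Fin.castAdd p a) = f a := by
  simp [Hfun]

lemma Hfun_na {n p : ℕ} (f : Fin n → ℝ → ℝ) (g : Fin p → ℝ → ℝ) (b : Fin p) :
    Hfun f g (Fin.natAdd n b) = g b := by
  simp [Hfun]

theorem nested_shuffle :
    ∃ C : ℝ, 1 ≤ C ∧
      ∀ (T θ t : ℝ), 0 ≤ θ → θ ≤ t → t ≤ T →
      ∀ (n p k : ℕ) (hk : 1 ≤ k) (hkn : k ≤ n) (hp : 1 ≤ p)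
        (f : Fin n → ℝ → ℝ) (g : Fin p → ℝ → ℝ),
        (∀ j, IntegrableOn (f j) (Set.Icc 0 T)) →
        (∀ i, IntegrableOn (g i) (Set.Icc 0 T)) →
        ∃ (A : Finset (Equiv.Perm (Fin (n + p))))
          (h : Equiv.Perm (Fin (n + p)) → Fin (n + p) → ℝ → ℝ),
          (A.card : ℝ) ≤ C ^ (n + p) ∧
          (∀ σ ∈ A, ∀ l, (∃ j, h σ l = f j) ∨ (∃ i, h σ l = g i)) ∧
          (∫ s in simplex n θ t,
              (∏ j : Fin n, f j (s j)) *
                ∫ r in simplex p θ (s ⟨k - 1, by omega⟩), ∏ i : Fin p, g i (r i)) =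
            ∑ σ ∈ A, ∫ w in simplex (n + p) θ t, ∏ l, h σ l (w l) := by
  classical
  refine ⟨2, by norm_num, ?_⟩
  intro T θ t hθ0 hθt htT n p k hk hkn hp f g hf hg
  have hkn' : k - 1 < n := by omega
  set kk : Fin n := ⟨k - 1, hkn'⟩ with hkkdef
  refine ⟨Finset.univ.filter (Qp n p kk), fun σ l => Hfun f g (σ l), ?_, ?_, ?_⟩
  · -- cardinality bound
    have h1 := card_filter_Qp_le n p kk
    calc ((Finset.univ.filter (Qp n p kk)).card : ℝ) ≤ ((2 ^ (n + p) : ℕ) : ℝ) := by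
          exact_mod_cast h1
    _ = (2 : ℝ) ^ (n + p) := by push_cast; ring
  · -- the functions come from the family
    intro σ _ l
    exact Fin.addCases
      (motive := fun y => (∃ j, Hfun f g y = f j) ∨ (∃ i, Hfun f g y = g i))
      (fun a => Or.inl ⟨a, Hfun_ca f g a⟩) (fun b => Or.inr ⟨b, Hfun_na f g b⟩) (σ l)
  · -- the integral identity
    show (∫ s in simplex n θ t,
        (∏ j : Fin n, f j (s j)) * ∫ r in simplex p θ (s kk), ∏ i : Fin p, g i (r i)) =
      ∑ σ ∈ Finset.univ.filter (Qp n p kk),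
        ∫ w in simplex (n + p) θ t, ∏ l, Hfun f g (σ l) (w l)
    have hHint : ∀ l, IntegrableOn (Hfun f g l) (Set.Icc 0 T) := by
      intro l
      refine Fin.addCases (motive := fun l => IntegrableOn (Hfun f g l) (Set.Icc 0 T) volume)
        (fun a => ?_) (fun b => ?_) l
      · show IntegrableOn (Hfun f g (Fin.castAdd p a)) (Set.Icc 0 T) volume
        rw [Hfun_ca]; exact hf a
      · show IntegrableOn (Hfun f g (Fin.natAdd n b)) (Set.Icc 0 T) volume
        rw [Hfun_na]; exact hg b
    set Φ : (Fin (n + p) → ℝ) → ℝ := fun w => ∏ l, Hfun f g l (w l) with hΦdef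
    have hcellmeas : ∀ σ : Equiv.Perm (Fin (n + p)), MeasurableSet (cellS (n + p) θ t σ) := by
      intro σ
      have hm : Measurable fun v : Fin (n + p) → ℝ => v ∘ ⇑σ :=
        measurable_pi_lambda _ fun i => measurable_pi_apply _
      exact hm measurableSet_simplex
    have hΦcell : ∀ σ, IntegrableOn Φ (cellS (n + p) θ t σ) := by
      intro σ
      refine integrableOn_of_subset_box hHint (hcellmeas σ) ?_
      intro v hv l
      have hb := cell_bounds hv l
      exact ⟨hθ0.trans hb.1.le, hb.2.le.trans htT⟩
    have hind : ∀ σ, Integrable ((cellS (n + p) θ t σ).indicator Φ) :=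
      fun σ => (integrable_indicator_iff (hcellmeas σ)).2 (hΦcell σ)
    -- the a.e. decomposition of the indicator of `Dset`
    have hN : (volume : Measure (Fin (n + p) → ℝ)) {v | ¬ Function.Injective v} = 0 := by
      have hsub : {v : Fin (n + p) → ℝ | ¬ Function.Injective v} ⊆
          ⋃ a : Fin (n + p), ⋃ b : Fin (n + p),
            {v : Fin (n + p) → ℝ | a ≠ b ∧ v a = v b} := by
        intro v hv
        rw [Set.mem_setOf_eq, Function.not_injective_iff] at hv
        obtain ⟨a, b, hab, hne⟩ := hv
        exact Set.mem_iUnion.2 ⟨a, Set.mem_iUnion.2 ⟨b, ⟨hne, hab⟩⟩⟩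
      refine measure_mono_null hsub ?_
      refine measure_iUnion_null fun a => measure_iUnion_null fun b => ?_
      by_cases hab : a = b
      · have he : {v : Fin (n + p) → ℝ | a ≠ b ∧ v a = v b} = ∅ := by
          ext v; simp [hab]
        rw [he]; exact measure_empty
      · exact measure_mono_null (fun v hv => hv.2) (null_eq_coords hab)
    have hkey : ∀ v : Fin (n + p) → ℝ, Function.Injective v →
        (Dset n p θ t kk).indicator Φ v =
          ∑ σ ∈ Finset.univ.filter (Qp n p kk), (cellS (n + p) θ t σ).indicator Φ v := by
      intro v hvinj
      by_cases hvD : v ∈ Dset n p θ t kk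
      · have hb : ∀ x, θ < v x ∧ v x < t := by
          intro x
          refine Fin.addCases (motive := fun x => θ < v x ∧ v x < t)
            (fun a => ?_) (fun b => ?_) x
          · exact ⟨(hvD.1.2 a).1, (hvD.1.2 a).2⟩
          · exact ⟨(hvD.2.2 b).1, lt_trans (hvD.2.2 b).2 (hvD.1.2 kk).2⟩
        obtain ⟨σ₀, hσ₀⟩ := exists_cell_mem hvinj hb
        have hQσ₀ : Qp n p kk σ₀ := (memD_iff_Q hσ₀).1 hvD
        have hA : σ₀ ∈ Finset.univ.filter (Qp n p kk) :=
          Finset.mem_filter.2 ⟨Finset.mem_univ _, hQσ₀⟩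
        rw [Set.indicator_of_mem hvD]
        rw [Finset.sum_eq_single σ₀]
        · exact (Set.indicator_of_mem hσ₀ Φ).symm
        · intro τ hτ hne
          exact Set.indicator_of_notMem (fun hvτ => hne (cell_disj hvτ hσ₀)) Φ
        · intro hnot; exact absurd hA hnot
      · rw [Set.indicator_of_notMem hvD]
        refine (Finset.sum_eq_zero fun τ hτ => ?_).symm
        exact Set.indicator_of_notMem
          (fun hvτ => hvD ((memD_iff_Q hvτ).2 (Finset.mem_filter.1 hτ).2)) Φ
    have hae : (Dset n p θ t kk).indicator Φ =ᵐ[(volume : Measure (Fin (n + p) → ℝ))]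
        fun v => ∑ σ ∈ Finset.univ.filter (Qp n p kk), (cellS (n + p) θ t σ).indicator Φ v := by
      refine Filter.eventuallyEq_of_mem (s := {v : Fin (n + p) → ℝ | Function.Injective v})
        (MeasureTheory.mem_ae_iff.2 ?_) hkey
      rw [Set.compl_setOf]
      exact hN
    -- the right-hand side
    have hRHS : (∑ σ ∈ Finset.univ.filter (Qp n p kk),
        ∫ w in simplex (n + p) θ t, ∏ l, Hfun f g (σ l) (w l)) =
        ∫ v, (Dset n p θ t kk).indicator Φ v := by
      have h1 : ∀ σ : Equiv.Perm (Fin (n + p)),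
          (∫ w in simplex (n + p) θ t, ∏ l, Hfun f g (σ l) (w l)) =
          ∫ v, (cellS (n + p) θ t σ).indicator Φ v := by
        intro σ
        rw [MeasureTheory.integral_indicator (hcellmeas σ)]
        rw [setIntegral_perm σ Φ]
        refine integral_congr_ae (ae_of_all _ fun w => ?_)
        show (∏ l, Hfun f g (σ l) (w l)) = ∏ l, Hfun f g l ((w ∘ ⇑σ⁻¹) l)
        refine Fintype.prod_equiv σ _ _ fun l => ?_
        simp
      rw [Finset.sum_congr rfl fun σ _ => h1 σ]
      rw [← integral_finset_sum _ fun σ _ => hind σ]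
      exact integral_congr_ae hae.symm
    -- the left-hand side
    set P : (Fin n → ℝ) × (Fin p → ℝ) → ℝ :=
      fun z => (∏ j, f j (z.1 j)) * ∏ i, g i (z.2 i) with hPdef
    set Dp : Set ((Fin n → ℝ) × (Fin p → ℝ)) :=
      {z | z.1 ∈ simplex n θ t ∧ z.2 ∈ simplex p θ (z.1 kk)} with hDpdef
    have hDpmeas : MeasurableSet Dp := measurableSet_Dprod
    have hstep2 : ∀ s : Fin n → ℝ, (simplex n θ t).indicator
        (fun s => (∏ j : Fin n, f j (s j)) *
          ∫ r in simplex p θ (s kk), ∏ i : Fin p, g i (r i)) s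
        = ∫ r, Dp.indicator P (s, r) := by
      intro s
      by_cases hs : s ∈ simplex n θ t
      · rw [Set.indicator_of_mem hs]
        rw [← MeasureTheory.integral_indicator measurableSet_simplex]
        rw [← MeasureTheory.integral_const_mul]
        refine integral_congr_ae (ae_of_all _ fun r => ?_)
        beta_reduce
        by_cases hr : r ∈ simplex p θ (s kk)
        · rw [Set.indicator_of_mem hr,
            Set.indicator_of_mem (show (s, r) ∈ Dp from ⟨hs, hr⟩)]
        · rw [Set.indicator_of_notMem hr,
            Set.indicator_of_notMem (show (s, r) ∉ Dp from fun hm => hr hm.2), mul_zero]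
      · rw [Set.indicator_of_notMem hs]
        have hz : ∀ r : Fin p → ℝ, Dp.indicator P (s, r) = 0 :=
          fun r => Set.indicator_of_notMem (fun hm => hs hm.1) P
        symm
        simp only [hz, integral_zero]
    have huncur : Integrable (Function.uncurry fun s r => Dp.indicator P (s, r))
        ((volume : Measure (Fin n → ℝ)).prod (volume : Measure (Fin p → ℝ))) := by
      rw [← Measure.volume_eq_prod]
      have hPbig : Integrable (fun z : (Fin n → ℝ) × (Fin p → ℝ) => Dp.indicator P z) := by
        rw [integrable_indicator_iff hDpmeas]
        have hF := integrableOn_prod_box (T := T) hf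
        have hG := integrableOn_prod_box (T := T) hg
        have hFG : Integrable (fun z : (Fin n → ℝ) × (Fin p → ℝ) =>
            (∏ j, (Set.Icc (0:ℝ) T).indicator (f j) (z.1 j)) *
            ∏ i, (Set.Icc (0:ℝ) T).indicator (g i) (z.2 i)) := by
          rw [Measure.volume_eq_prod]
          exact hF.mul_prod hG
        refine (hFG.integrableOn (s := Dp)).congr_fun ?_ hDpmeas
        rintro z hz
        have hz1 : ∀ j, z.1 j ∈ Set.Icc (0:ℝ) T := fun j =>
          ⟨hθ0.trans (hz.1.2 j).1.le, (hz.1.2 j).2.le.trans htT⟩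
        have hz2 : ∀ i, z.2 i ∈ Set.Icc (0:ℝ) T := fun i =>
          ⟨hθ0.trans (hz.2.2 i).1.le, ((hz.2.2 i).2.trans (hz.1.2 kk).2).le.trans htT⟩
        show _ = P z
        rw [hPdef]
        exact congrArg₂ (· * ·)
          (Finset.prod_congr rfl fun j _ => Set.indicator_of_mem (hz1 j) _)
          (Finset.prod_congr rfl fun i _ => Set.indicator_of_mem (hz2 i) _)
      exact hPbig
    have hid : ∀ w : Fin (n + p) → ℝ,
        Dp.indicator P (splitEquiv n p w) = (Dset n p θ t kk).indicator Φ w := by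
      intro w
      rw [splitEquiv_apply]
      have hval : P ((fun a : Fin n => w (Fin.castAdd p a)),
          (fun b : Fin p => w (Fin.natAdd n b))) = Φ w := by
        show ((∏ j, f j (w (Fin.castAdd p j))) * ∏ i, g i (w (Fin.natAdd n i)))
          = ∏ l, Hfun f g l (w l)
        rw [Fin.prod_univ_add (f := fun l => Hfun f g l (w l))]
        congr 1
        · exact (Finset.prod_congr rfl fun j _ => congrFun (Hfun_ca f g j) _).symm
        · exact (Finset.prod_congr rfl fun i _ => congrFun (Hfun_na f g i) _).symm
      by_cases hw : w ∈ Dset n p θ t kk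
      · rw [Set.indicator_of_mem hw,
          Set.indicator_of_mem (show ((fun a : Fin n => w (Fin.castAdd p a)),
            (fun b : Fin p => w (Fin.natAdd n b))) ∈ Dp from hw), hval]
      · rw [Set.indicator_of_notMem hw,
          Set.indicator_of_notMem (show ((fun a : Fin n => w (Fin.castAdd p a)),
            (fun b : Fin p => w (Fin.natAdd n b))) ∉ Dp from hw)]
    have hLHS : (∫ s in simplex n θ t,
        (∏ j : Fin n, f j (s j)) * ∫ r in simplex p θ (s kk), ∏ i : Fin p, g i (r i)) =
        ∫ v, (Dset n p θ t kk).indicator Φ v := by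
      rw [← MeasureTheory.integral_indicator measurableSet_simplex]
      calc (∫ s, (simplex n θ t).indicator
            (fun s => (∏ j : Fin n, f j (s j)) *
              ∫ r in simplex p θ (s kk), ∏ i : Fin p, g i (r i)) s)
          = ∫ s, ∫ r, Dp.indicator P (s, r) :=
            integral_congr_ae (ae_of_all _ hstep2)
        _ = ∫ z : (Fin n → ℝ) × (Fin p → ℝ), Dp.indicator P (z.1, z.2)
              ∂((volume : Measure (Fin n → ℝ)).prod (volume : Measure (Fin p → ℝ))) :=
            MeasureTheory.integral_integral huncur
        _ = ∫ z : (Fin n → ℝ) × (Fin p → ℝ), Dp.indicator P z := by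
            simp only [Prod.mk.eta]
            rw [← Measure.volume_eq_prod]
        _ = ∫ w, Dp.indicator P (splitEquiv n p w) :=
            ((measurePreserving_splitEquiv n p).integral_comp' _).symm
        _ = ∫ v, (Dset n p θ t kk).indicator Φ v :=
            integral_congr_ae (ae_of_all _ hid)
    exact hLHS.trans hRHS.symm
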